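/- Let p ∈ (0,1) and let q be its Hölder conjugate, 1/p + 1/q = 1 (so q < 0). For every z ∈ Int C, the supremum over v ∈ C of the quantity η(z,v) − L_p(v) equals −(1/q)(−η(z,z))^{q/2}, and this supremum is attained at v = (−η(z,z))^{(q−2)/2} · z. -/

import Mathlib

/-- The Minkowski bilinear form on ℝ^{1+n}: η(v,w) = -v₀w₀ + Σᵢ vᵢwᵢ. -/
noncomputable def eta {n : ℕ} (v w : Fin (n + 1) → ℝ) : ℝ :=
  -(v 0 * w 0) + ∑ i : Fin n, v i.succ * w i.succ

/-- The future causal cone C = {v : η(v,v) ≤ 0 and v₀ ≥ 0}. -/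
def FutureCone (n : ℕ) : Set (Fin (n + 1) → ℝ) :=
  {v | eta v v ≤ 0 ∧ 0 ≤ v 0}

/-- The interior of the future causal cone: Int C = {v : η(v,v) < 0 and v₀ > 0}. -/
def FutureConeInt (n : ℕ) : Set (Fin (n + 1) → ℝ) :=
  {v | eta v v < 0 ∧ 0 < v 0}

/-- The Lagrangian L_p(v) = -(1/p)(-η(v,v))^{p/2}. -/
noncomputable def Lp {n : ℕ} (p : ℝ) (v : Fin (n + 1) → ℝ) : ℝ :=
  -(1 / p) * (-eta v v) ^ (p / 2)

lemma eta_smul_right {n : ℕ} (v w : Fin (n + 1) → ℝ) (c : ℝ) :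
    eta v (c • w) = c * eta v w := by
  simp only [eta, Pi.smul_apply, smul_eq_mul, mul_add, Finset.mul_sum]
  congr 1
  · ring
  · exact Finset.sum_congr rfl fun i _ => by ring

lemma eta_smul_left {n : ℕ} (v w : Fin (n + 1) → ℝ) (c : ℝ) :
    eta (c • v) w = c * eta v w := by
  simp only [eta, Pi.smul_apply, smul_eq_mul, mul_add, Finset.mul_sum]
  congr 1
  · ring
  · exact Finset.sum_congr rfl fun i _ => by ring

/-- Reversed Young inequality for `0 < p < 1`, in divided form. -/
lemma scalar_ineq {a x p q : ℝ} (ha : 0 < a) (hx : 0 ≤ x)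
    (hp0 : 0 < p) (hp1 : p < 1) (hq : 1 / p + 1 / q = 1) :
    (1 / p) * x ^ p ≤ a * x - (1 / q) * a ^ q := by
  have hp' : p ≠ 0 := ne_of_gt hp0
  have h1p : (0:ℝ) < 1 - p := by linarith
  have hq0 : q ≠ 0 := by
    intro h
    rw [h] at hq
    simp at hq
    rw [hq] at hp1
    norm_num at hp1
  have hpq : p * q = p + q := by
    field_simp at hq
    linarith
  have hqval : -p * (1 / (1 - p)) = q := by
    field_simp
    nlinarith [hpq]
  have hP : (1 / p).HolderConjugate (1 / (1 - p)) := by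
    rw [Real.holderConjugate_iff]
    constructor
    · exact one_lt_one_div hp0 hp1
    · rw [one_div, one_div, inv_inv, inv_inv]; ring
  have hax : 0 ≤ a * x := mul_nonneg ha.le hx
  have hy := Real.young_inequality_of_nonneg
    (Real.rpow_nonneg hax p) (Real.rpow_nonneg ha.le (-p)) hP
  have e1 : (a * x) ^ p * a ^ (-p) = x ^ p := by
    rw [Real.mul_rpow ha.le hx, mul_comm (a ^ p) (x ^ p), mul_assoc,
      ← Real.rpow_add ha]
    simp
  have e2 : ((a * x) ^ p) ^ (1 / p) = a * x := by
    rw [← Real.rpow_mul hax, mul_one_div, div_self hp', Real.rpow_one]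
  have e3 : (a ^ (-p)) ^ (1 / (1 - p)) = a ^ q := by
    rw [← Real.rpow_mul ha.le, hqval]
  rw [e1, e2, e3] at hy
  have hy' : x ^ p ≤ a * x * p + a ^ q * (1 - p) := by
    have d1 : a * x / (1 / p) = a * x * p := by field_simp
    have d2 : a ^ q / (1 / (1 - p)) = a ^ q * (1 - p) := by field_simp
    linarith [hy, d1, d2]
  -- hy : x ^ p ≤ a * x * p + a ^ q * (1 - p)
  have hq' : 1 / q = (p - 1) / p := by
    have h2 : (p - 1) / p = 1 - 1 / p := by field_simp
    linarith [h2]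
  rw [hq']
  have h3 : (1 / p) * (x ^ p) ≤ (1 / p) * (a * x * p + a ^ q * (1 - p)) :=
    mul_le_mul_of_nonneg_left hy' (by positivity)
  calc (1 / p) * x ^ p ≤ (1 / p) * (a * x * p + a ^ q * (1 - p)) := h3
    _ = a * x - (p - 1) / p * a ^ q := by field_simp; ring

/-- Reverse Cauchy–Schwarz for the future cone. -/
lemma revCS {n : ℕ} {z v : Fin (n + 1) → ℝ} (hz : z ∈ FutureConeInt n)
    (hv : v ∈ FutureCone n) :
    eta z v ≤ -(Real.sqrt (-eta z z) * Real.sqrt (-eta v v)) := by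
  obtain ⟨hzz, hz0⟩ := hz
  obtain ⟨hvv, hv0⟩ := hv
  set Z := Real.sqrt (∑ i : Fin n, z i.succ ^ 2) with hZdef
  set V := Real.sqrt (∑ i : Fin n, v i.succ ^ 2) with hVdef
  have hZ0 : 0 ≤ Z := Real.sqrt_nonneg _
  have hV0 : 0 ≤ V := Real.sqrt_nonneg _
  have hZ2 : Z ^ 2 = ∑ i : Fin n, z i.succ ^ 2 :=
    Real.sq_sqrt (Finset.sum_nonneg fun i _ => sq_nonneg _)
  have hV2 : V ^ 2 = ∑ i : Fin n, v i.succ ^ 2 :=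
    Real.sq_sqrt (Finset.sum_nonneg fun i _ => sq_nonneg _)
  have hsumz : ∑ i : Fin n, z i.succ * z i.succ = ∑ i : Fin n, z i.succ ^ 2 :=
    Finset.sum_congr rfl fun i _ => (sq _).symm
  have hsumv : ∑ i : Fin n, v i.succ * v i.succ = ∑ i : Fin n, v i.succ ^ 2 :=
    Finset.sum_congr rfl fun i _ => (sq _).symm
  have hszz : -eta z z = z 0 ^ 2 - Z ^ 2 := by
    simp only [eta]; rw [hZ2, hsumz]; ring
  have hsvv : -eta v v = v 0 ^ 2 - V ^ 2 := by
    simp only [eta]; rw [hV2, hsumv]; ring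
  have hCS : ∑ i : Fin n, z i.succ * v i.succ ≤ Z * V :=
    Real.sum_mul_le_sqrt_mul_sqrt _ _ _
  have hZlt : Z < z 0 := by
    have h1 : Z ^ 2 < z 0 ^ 2 := by nlinarith [hzz, hszz]
    nlinarith
  have hVle : V ≤ v 0 := by
    have h1 : V ^ 2 ≤ v 0 ^ 2 := by nlinarith [hvv, hsvv]
    nlinarith
  have hnn : 0 ≤ z 0 * v 0 - Z * V := by nlinarith
  have hsq : (-eta z z) * (-eta v v) ≤ (z 0 * v 0 - Z * V) ^ 2 := by
    rw [hszz, hsvv]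
    nlinarith [sq_nonneg (z 0 * V - v 0 * Z)]
  have h2 : Real.sqrt ((-eta z z) * (-eta v v)) ≤ z 0 * v 0 - Z * V := by
    calc Real.sqrt ((-eta z z) * (-eta v v))
        ≤ Real.sqrt ((z 0 * v 0 - Z * V) ^ 2) := Real.sqrt_le_sqrt hsq
      _ = z 0 * v 0 - Z * V := Real.sqrt_sq hnn
  have hst : Real.sqrt (-eta z z) * Real.sqrt (-eta v v)
      = Real.sqrt ((-eta z z) * (-eta v v)) :=
    (Real.sqrt_mul (by linarith) _).symm
  have hlhs : eta z v ≤ -(z 0 * v 0) + Z * V := by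
    simp only [eta]
    linarith [hCS]
  rw [hst]
  linarith

theorem stmt_4 (n : ℕ) (p q : ℝ) (hp : p ∈ Set.Ioo (0 : ℝ) 1)
    (hq : 1 / p + 1 / q = 1)
    (z : Fin (n + 1) → ℝ) (hz : z ∈ FutureConeInt n) :
    (∀ v ∈ FutureCone n, eta z v - Lp p v ≤ -(1 / q) * (-eta z z) ^ (q / 2)) ∧
    ((-eta z z) ^ ((q - 2) / 2) • z ∈ FutureCone n) ∧
    eta z ((-eta z z) ^ ((q - 2) / 2) • z) - Lp p ((-eta z z) ^ ((q - 2) / 2) • z)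
      = -(1 / q) * (-eta z z) ^ (q / 2) := by
  obtain ⟨hp0, hp1⟩ := hp
  have hp' : p ≠ 0 := ne_of_gt hp0
  have hq0 : q ≠ 0 := by
    intro h
    rw [h] at hq
    simp at hq
    rw [hq] at hp1
    norm_num at hp1
  have hpq : p * q = p + q := by
    have h := hq
    field_simp at h
    linarith
  set s : ℝ := -eta z z with hsdef
  have hs : 0 < s := neg_pos.2 hz.1
  set lam : ℝ := s ^ ((q - 2) / 2) with hlamdef
  have hlam : 0 < lam := Real.rpow_pos_of_pos hs _
  refine ⟨?_, ?_, ?_⟩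
  · intro v hv
    set t : ℝ := -eta v v with htdef
    have ht : 0 ≤ t := by rw [htdef]; linarith [hv.1]
    have ha : 0 < Real.sqrt s := Real.sqrt_pos.2 hs
    have hx : 0 ≤ Real.sqrt t := Real.sqrt_nonneg _
    have hscal := scalar_ineq ha hx hp0 hp1 hq
    have hrev := revCS hz hv
    rw [← hsdef, ← htdef] at hrev
    have hxp : t ^ (p / 2) = Real.sqrt t ^ p := by
      rw [Real.sqrt_eq_rpow, ← Real.rpow_mul ht]
      congr 1
      ring
    have haq : Real.sqrt s ^ q = s ^ (q / 2) := by
      rw [Real.sqrt_eq_rpow, ← Real.rpow_mul hs.le]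
      congr 1
      ring
    have hLp : Lp p v = -(1 / p) * t ^ (p / 2) := by
      simp only [Lp, ← htdef]
    rw [hLp, hxp, ← haq]
    linarith
  · refine ⟨?_, ?_⟩
    · have h1 : eta (lam • z) (lam • z) = lam * (lam * eta z z) := by
        rw [eta_smul_left, eta_smul_right]
      rw [h1]
      have h2 : lam * eta z z < 0 := mul_neg_of_pos_of_neg hlam hz.1
      nlinarith
    · have h0 : (lam • z) 0 = lam * z 0 := rfl
      rw [h0]
      have := hz.2
      positivity
  · have h1 : eta z (lam • z) = lam * eta z z := eta_smul_right z z lam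
    have h2 : eta (lam • z) (lam • z) = lam * (lam * eta z z) := by
      rw [eta_smul_left, eta_smul_right]
    have hlam2 : lam * lam * s = s ^ (q - 1) := by
      rw [hlamdef, ← Real.rpow_add hs, ← Real.rpow_add_one hs.ne']
      congr 1
      ring
    have hls : lam * s = s ^ (q / 2) := by
      rw [hlamdef, ← Real.rpow_add_one hs.ne']
      congr 1
      ring
    have hLp2 : Lp p (lam • z) = -(1 / p) * s ^ (q / 2) := by
      have e : -eta (lam • z) (lam • z) = s ^ (q - 1) := by
        rw [h2, ← hlam2, hsdef]; ring
      have e5 : Lp p (lam • z) = -(1 / p) * (s ^ (q - 1)) ^ (p / 2) := by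
        simp only [Lp, e]
      rw [e5, ← Real.rpow_mul hs.le]
      congr 2
      nlinarith [hpq]
    have e6 : lam * eta z z = -(s ^ (q / 2)) := by
      rw [← hls, hsdef]; ring
    rw [h1, hLp2, e6]
    linear_combination s ^ (q / 2) * hq
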